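/- Let m > 0 and λ, λ' > 0. There exists a constant C > 0 such that for every measurable f : ℝ³ → ℂ with ∫_{ℝ³} (1+|p|²)^{1/2} |f(p)|² dp < ∞, the function Df(p) := 2π² (√(ν|p|²+λ) − √(ν|p|²+λ')) f(p) + (λ'−λ) ∫_{ℝ³} f(q) / ((G(p,q)+λ)(G(p,q)+λ')) dq satisfies ∫_{ℝ³} (1+|p|²)^{1/2} |Df(p)|² dp ≤ C ∫_{ℝ³} (1+|p|²)^{1/2} |f(p)|² dp. (This expresses that the difference T_λ − T_{λ'} of the charge operators is bounded on the Sobolev space H^{1/2}(ℝ³), read on the Fourier side.) -/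

import Mathlib

open MeasureTheory
open scoped RealInnerProductSpace

noncomputable section

abbrev E3 := EuclideanSpace ℝ (Fin 3)

def mu (m : ℝ) : ℝ := 2 / (m + 1)

def nu (m : ℝ) : ℝ := m * (m + 2) / (m + 1) ^ 2

def Gker (m : ℝ) (p q : E3) : ℝ := ‖p‖ ^ 2 + ‖q‖ ^ 2 + mu m * ⟪p, q⟫

private lemma aux_sqrt_diff {a b x y : ℝ} (ha : 0 < a) (hb : 0 < b) (hx : a ≤ x) (hy : b ≤ y) :
    |Real.sqrt x - Real.sqrt y| ≤ |x - y| / (Real.sqrt a + Real.sqrt b) := by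
  have hx0 : 0 ≤ x := ha.le.trans hx
  have hy0 : 0 ≤ y := hb.le.trans hy
  have hsa : 0 < Real.sqrt a := Real.sqrt_pos.mpr ha
  have hsb : 0 < Real.sqrt b := Real.sqrt_pos.mpr hb
  have hs : 0 < Real.sqrt a + Real.sqrt b := by linarith
  rw [le_div_iff₀ hs]
  have key : |Real.sqrt x - Real.sqrt y| * (Real.sqrt x + Real.sqrt y) = |x - y| := by
    rw [← abs_of_nonneg (show (0:ℝ) ≤ Real.sqrt x + Real.sqrt y by positivity), ← abs_mul]
    congr 1
    linear_combination Real.sq_sqrt hx0 - Real.sq_sqrt hy0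
  calc |Real.sqrt x - Real.sqrt y| * (Real.sqrt a + Real.sqrt b)
      ≤ |Real.sqrt x - Real.sqrt y| * (Real.sqrt x + Real.sqrt y) := by
        apply mul_le_mul_of_nonneg_left _ (abs_nonneg _)
        have h1 : Real.sqrt a ≤ Real.sqrt x := Real.sqrt_le_sqrt hx
        have h2 : Real.sqrt b ≤ Real.sqrt y := Real.sqrt_le_sqrt hy
        linarith
    _ = |x - y| := key

private lemma aux_int_weight {s : ℝ} (hs : 3 / 2 < s) :
    Integrable (fun q : E3 => (1 + ‖q‖ ^ 2) ^ (-s)) := by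
  have h3 : (Module.finrank ℝ E3 : ℝ) < 2 * s := by
    simp only [finrank_euclideanSpace, Fintype.card_fin]
    push_cast; linarith
  have h := integrable_rpow_neg_one_add_norm_sq (E := E3) (μ := volume) h3
  simpa [show -(2*s)/2 = -s by ring] using h

private lemma aux_T_le {x y s t : ℝ} (hx : 0 ≤ x) (hy : 0 ≤ y) (hst : t ≤ s) (ht : 0 ≤ t) :
    (1 + x + y) ^ (-s) ≤ (1 + y) ^ (-t) :=
  calc (1 + x + y) ^ (-s) ≤ (1 + x + y) ^ (-t) :=
        Real.rpow_le_rpow_of_exponent_le (by linarith) (by linarith)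
    _ ≤ (1 + y) ^ (-t) :=
        Real.rpow_le_rpow_of_nonpos (by linarith) (by linarith) (by linarith)

private lemma aux_T_le' {x y s t : ℝ} (hx : 0 ≤ x) (hy : 0 ≤ y) (hst : t ≤ s) (ht : 0 ≤ t) :
    (1 + x + y) ^ (-s) ≤ (1 + x) ^ (-t) := by
  rw [show (1:ℝ) + x + y = 1 + y + x by ring]
  exact aux_T_le hy hx hst ht

private lemma aux_Tsplit {x y : ℝ} (hx : 0 ≤ x) (hy : 0 ≤ y) :
    (1 + x + y) ^ (-(2:ℝ)) ≤ (1 + x) ^ (-(1/2:ℝ)) * (1 + y) ^ (-(3/2:ℝ)) := by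
  have h1 : (0:ℝ) < 1 + x := by linarith
  have h2 : (0:ℝ) < 1 + y := by linarith
  have h3 : (0:ℝ) < 1 + x + y := by linarith
  have key : (1 + x) ^ ((1/2:ℝ)) * (1 + y) ^ ((3/2:ℝ)) ≤ (1 + x + y) ^ (2:ℝ) := by
    rw [show (2:ℝ) = 1/2 + 3/2 by norm_num, Real.rpow_add h3]
    have k1 : (1 + x) ^ ((1/2:ℝ)) ≤ (1 + x + y) ^ ((1/2:ℝ)) :=
      Real.rpow_le_rpow h1.le (by linarith) (by norm_num)
    have k2 : (1 + y) ^ ((3/2:ℝ)) ≤ (1 + x + y) ^ ((3/2:ℝ)) :=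
      Real.rpow_le_rpow h2.le (by linarith) (by norm_num)
    have n1 : (0:ℝ) ≤ (1 + x) ^ ((1/2:ℝ)) := Real.rpow_nonneg h1.le _
    have n2 : (0:ℝ) ≤ (1 + x + y) ^ ((1/2:ℝ)) := Real.rpow_nonneg h3.le _
    have n3 : (0:ℝ) ≤ (1 + y) ^ ((3/2:ℝ)) := Real.rpow_nonneg h2.le _
    nlinarith
  rw [show (-(2:ℝ)) = -(2:ℝ) from rfl, Real.rpow_neg h3.le,
    show (-(1/2:ℝ)) = -(1/2:ℝ) from rfl, Real.rpow_neg h1.le, Real.rpow_neg h2.le, ← mul_inv]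
  exact inv_anti₀ (by positivity) key

private lemma aux_cs {α : Type*} [MeasurableSpace α] {μ : Measure α} {u v : α → ℝ}
    (hu : AEStronglyMeasurable u μ) (hv : AEStronglyMeasurable v μ)
    (hun : ∀ x, 0 ≤ u x) (hvn : ∀ x, 0 ≤ v x)
    (hu2 : Integrable (fun x => u x ^ 2) μ) (hv2 : Integrable (fun x => v x ^ 2) μ) :
    (∫ x, u x * v x ∂μ) ^ 2 ≤ (∫ x, u x ^ 2 ∂μ) * (∫ x, v x ^ 2 ∂μ) := by
  have hpq : Real.HolderConjugate 2 2 := Real.HolderConjugate.two_two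
  have h2 : ENNReal.ofReal (2:ℝ) = 2 := by norm_num
  have hmu : MemLp u (ENNReal.ofReal 2) μ := by
    rw [h2]; exact (memLp_two_iff_integrable_sq hu).mpr hu2
  have hmv : MemLp v (ENNReal.ofReal 2) μ := by
    rw [h2]; exact (memLp_two_iff_integrable_sq hv).mpr hv2
  have h := integral_mul_le_Lp_mul_Lq_of_nonneg hpq (Filter.Eventually.of_forall hun)
    (Filter.Eventually.of_forall hvn) hmu hmv
  simp_rw [show ∀ r : ℝ, r ^ (2:ℝ) = r ^ 2 from fun r => by
    rw [show (2:ℝ) = ((2:ℕ):ℝ) by norm_num, Real.rpow_natCast]] at h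
  have ha : 0 ≤ ∫ x, u x ^ 2 ∂μ := integral_nonneg fun x => sq_nonneg _
  have hb : 0 ≤ ∫ x, v x ^ 2 ∂μ := integral_nonneg fun x => sq_nonneg _
  have hl : 0 ≤ ∫ x, u x * v x ∂μ := integral_nonneg fun x => mul_nonneg (hun x) (hvn x)
  calc (∫ x, u x * v x ∂μ) ^ 2
      ≤ ((∫ x, u x ^ 2 ∂μ) ^ ((1:ℝ)/2) * (∫ x, v x ^ 2 ∂μ) ^ ((1:ℝ)/2)) ^ 2 := by
        apply pow_le_pow_left₀ hl
        simpa using h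
    _ = (∫ x, u x ^ 2 ∂μ) * (∫ x, v x ^ 2 ∂μ) := by
        rw [mul_pow, ← Real.rpow_natCast ((∫ x, u x ^ 2 ∂μ) ^ ((1:ℝ)/2)) 2,
          ← Real.rpow_natCast ((∫ x, v x ^ 2 ∂μ) ^ ((1:ℝ)/2)) 2,
          ← Real.rpow_mul ha, ← Real.rpow_mul hb]
        norm_num

set_option maxHeartbeats 1600000 in
/-- The difference `T_λ − T_{λ'}` of the charge operators is bounded on `H^{1/2}(ℝ³)`,
read on the Fourier side. -/
theorem charge_operator_shift_difference_bounded
    (m lam lam' : ℝ) (hm : 0 < m) (hlam : 0 < lam) (hlam' : 0 < lam') :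
    ∃ C > 0, ∀ f : E3 → ℂ, Measurable f →
      Integrable (fun p => (1 + ‖p‖ ^ 2) ^ ((1 : ℝ) / 2) * ‖f p‖ ^ 2) →
      (∫ p : E3, (1 + ‖p‖ ^ 2) ^ ((1 : ℝ) / 2) *
          ‖((2 * Real.pi ^ 2 *
              (Real.sqrt (nu m * ‖p‖ ^ 2 + lam) - Real.sqrt (nu m * ‖p‖ ^ 2 + lam')) : ℝ) : ℂ)
              * f p
            + ((lam' - lam : ℝ) : ℂ) *
              ∫ q : E3, f q / (((Gker m p q + lam) * (Gker m p q + lam') : ℝ) : ℂ)‖ ^ 2)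
        ≤ C * ∫ p : E3, (1 + ‖p‖ ^ 2) ^ ((1 : ℝ) / 2) * ‖f p‖ ^ 2 := by
  have hm1 : (0:ℝ) < m + 1 := by linarith
  have hnu0 : 0 ≤ nu m := by unfold nu; positivity
  set cst := m / (m + 1) with hcst
  have hcst0 : 0 < cst := by positivity
  set c1 := min cst lam with hc1def
  set c2 := min cst lam' with hc2def
  have hc1 : 0 < c1 := lt_min hcst0 hlam
  have hc2 : 0 < c2 := lt_min hcst0 hlam'
  set M0 := (c1 * c2)⁻¹ with hM0
  have hM00 : 0 < M0 := by positivity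
  set d := 2 * Real.pi ^ 2 * (|lam - lam'| / (Real.sqrt lam + Real.sqrt lam')) with hdd
  have hd0 : 0 ≤ d := by positivity
  set Λ := |lam' - lam| with hΛ
  have hΛ0 : 0 ≤ Λ := abs_nonneg _
  have hTpos : ∀ p q : E3, (0:ℝ) < 1 + ‖p‖ ^ 2 + ‖q‖ ^ 2 := fun p q => by positivity
  -- lower bound for Gker + shift
  have hGlow : ∀ (lam0 : ℝ), 0 < lam0 → ∀ p q : E3,
      min cst lam0 * (1 + ‖p‖ ^ 2 + ‖q‖ ^ 2) ≤ Gker m p q + lam0 := by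
    intro lam0 h0 p q
    have hip := (abs_le.mp (abs_real_inner_le_norm p q)).1
    have hmu0 : (0:ℝ) ≤ mu m := by unfold mu; positivity
    have h2 : mu m * (-(‖p‖ * ‖q‖)) ≤ mu m * ⟪p, q⟫ := mul_le_mul_of_nonneg_left hip hmu0
    rw [mul_neg] at h2
    have h3 : 2 * (‖p‖ * ‖q‖) ≤ ‖p‖ ^ 2 + ‖q‖ ^ 2 := by nlinarith [sq_nonneg (‖p‖ - ‖q‖)]
    have h4 : mu m * (‖p‖ * ‖q‖) ≤ (‖p‖ ^ 2 + ‖q‖ ^ 2) / (m + 1) := by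
      have e : mu m * (‖p‖ * ‖q‖) = 2 * (‖p‖ * ‖q‖) / (m + 1) := by unfold mu; ring
      rw [e]; gcongr
    have h5 : cst * (‖p‖ ^ 2 + ‖q‖ ^ 2) = (‖p‖ ^ 2 + ‖q‖ ^ 2) - (‖p‖ ^ 2 + ‖q‖ ^ 2) / (m + 1) := by
      rw [hcst]; field_simp; ring
    have h6 : min cst lam0 * (‖p‖ ^ 2 + ‖q‖ ^ 2) ≤ cst * (‖p‖ ^ 2 + ‖q‖ ^ 2) :=
      mul_le_mul_of_nonneg_right (min_le_left _ _) (by positivity)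
    have h7 : min cst lam0 ≤ lam0 := min_le_right _ _
    have h8 : min cst lam0 * (1 + ‖p‖ ^ 2 + ‖q‖ ^ 2)
        = min cst lam0 + min cst lam0 * (‖p‖ ^ 2 + ‖q‖ ^ 2) := by ring
    unfold Gker
    linarith
  -- multiplier bound
  have hmult : ∀ p : E3, |2 * Real.pi ^ 2 *
      (Real.sqrt (nu m * ‖p‖ ^ 2 + lam) - Real.sqrt (nu m * ‖p‖ ^ 2 + lam'))| ≤ d := by
    intro p
    rw [hdd, abs_mul, abs_of_nonneg (by positivity : (0:ℝ) ≤ 2 * Real.pi ^ 2)]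
    apply mul_le_mul_of_nonneg_left _ (by positivity)
    have hx : lam ≤ nu m * ‖p‖ ^ 2 + lam := le_add_of_nonneg_left (by positivity)
    have hy : lam' ≤ nu m * ‖p‖ ^ 2 + lam' := le_add_of_nonneg_left (by positivity)
    have h := aux_sqrt_diff hlam hlam' hx hy
    have e : (nu m * ‖p‖ ^ 2 + lam) - (nu m * ‖p‖ ^ 2 + lam') = lam - lam' := by ring
    rw [e] at h
    exact h
  -- denominator lower bound
  have hdenlow : ∀ p q : E3,
      c1 * c2 * (1 + ‖p‖ ^ 2 + ‖q‖ ^ 2) ^ 2 ≤ (Gker m p q + lam) * (Gker m p q + lam') := by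
    intro p q
    have a1 := hGlow lam hlam p q
    have a2 := hGlow lam' hlam' p q
    calc c1 * c2 * (1 + ‖p‖ ^ 2 + ‖q‖ ^ 2) ^ 2
        = (c1 * (1 + ‖p‖ ^ 2 + ‖q‖ ^ 2)) * (c2 * (1 + ‖p‖ ^ 2 + ‖q‖ ^ 2)) := by ring
      _ ≤ (Gker m p q + lam) * (Gker m p q + lam') := by
          apply mul_le_mul a1 a2 (by positivity)
          exact le_trans (by positivity) a1
  have hdenpos : ∀ p q : E3, (0:ℝ) < (Gker m p q + lam) * (Gker m p q + lam') :=
    fun p q => lt_of_lt_of_le (by positivity) (hdenlow p q)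
  have hT_eq : ∀ p q : E3,
      (1 + ‖p‖ ^ 2 + ‖q‖ ^ 2 : ℝ) ^ (-(2:ℝ)) = ((1 + ‖p‖ ^ 2 + ‖q‖ ^ 2) ^ 2)⁻¹ := by
    intro p q
    rw [show (-(2:ℝ)) = -((2:ℕ):ℝ) by norm_num, Real.rpow_neg (hTpos p q).le, Real.rpow_natCast]
  -- kernel bound
  have hker : ∀ (f : E3 → ℂ) (p q : E3),
      ‖f q / (((Gker m p q + lam) * (Gker m p q + lam') : ℝ) : ℂ)‖
        ≤ M0 * ((1 + ‖p‖ ^ 2 + ‖q‖ ^ 2) ^ (-(2:ℝ)) * ‖f q‖) := by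
    intro f p q
    rw [norm_div, Complex.norm_real, Real.norm_eq_abs, abs_of_pos (hdenpos p q),
      div_le_iff₀ (hdenpos p q), hT_eq p q]
    have h1 := hdenlow p q
    have key : 1 ≤ M0 * ((1 + ‖p‖ ^ 2 + ‖q‖ ^ 2) ^ 2)⁻¹
        * ((Gker m p q + lam) * (Gker m p q + lam')) := by
      rw [hM0, show (c1*c2)⁻¹ * ((1 + ‖p‖ ^ 2 + ‖q‖ ^ 2) ^ 2)⁻¹
          = (c1*c2*(1 + ‖p‖ ^ 2 + ‖q‖ ^ 2) ^ 2)⁻¹ from (mul_inv _ _).symm,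
        ← div_eq_inv_mul, le_div_iff₀ (by positivity), one_mul]
      exact h1
    calc ‖f q‖ = ‖f q‖ * 1 := by ring
      _ ≤ ‖f q‖ * (M0 * ((1 + ‖p‖ ^ 2 + ‖q‖ ^ 2) ^ 2)⁻¹
            * ((Gker m p q + lam) * (Gker m p q + lam'))) :=
          mul_le_mul_of_nonneg_left key (norm_nonneg _)
      _ = M0 * (((1 + ‖p‖ ^ 2 + ‖q‖ ^ 2) ^ 2)⁻¹ * ‖f q‖)
            * ((Gker m p q + lam) * (Gker m p q + lam')) := by ring
  -- tail weights
  have hI1int : Integrable (fun q : E3 => (1 + ‖q‖ ^ 2) ^ (-(7/4 : ℝ))) :=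
    aux_int_weight (by norm_num)
  have hI2int : Integrable (fun q : E3 => (1 + ‖q‖ ^ 2) ^ (-(2 : ℝ))) :=
    aux_int_weight (by norm_num)
  set I1 := ∫ q : E3, (1 + ‖q‖ ^ 2) ^ (-(7/4:ℝ)) with hI1
  set I2 := ∫ q : E3, (1 + ‖q‖ ^ 2) ^ (-(2:ℝ)) with hI2
  have hI10 : 0 ≤ I1 := integral_nonneg fun q => by positivity
  have hI20 : 0 ≤ I2 := integral_nonneg fun q => by positivity
  refine ⟨2*d^2 + 2*Λ^2*M0^2*I1*I2 + 1, ?_, ?_⟩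
  · nlinarith [sq_nonneg d, mul_nonneg (mul_nonneg (mul_nonneg
      (mul_nonneg (by norm_num : (0:ℝ) ≤ 2) (sq_nonneg Λ)) (sq_nonneg M0)) hI10) hI20]
  intro f hfm hfi
  set N := ∫ p : E3, (1 + ‖p‖ ^ 2) ^ ((1:ℝ)/2) * ‖f p‖ ^ 2 with hN
  have hN0 : 0 ≤ N := integral_nonneg fun p => by positivity
  -- continuity helpers
  have hWcont : ∀ s : ℝ, Continuous fun q : E3 => ((1:ℝ) + ‖q‖ ^ 2) ^ s := fun s =>
    (continuous_const.add (continuous_norm.pow 2) : Continuous fun q : E3 => (1:ℝ) + ‖q‖ ^ 2).rpow_const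
      fun q => Or.inl (by simp only [Pi.add_apply, Pi.pow_apply, Function.comp_apply]; positivity)
  have hTcont : ∀ p : E3, Continuous fun q : E3 => ((1:ℝ) + ‖p‖ ^ 2 + ‖q‖ ^ 2) ^ (-(2:ℝ)) :=
    fun p => (continuous_const.add (continuous_norm.pow 2) : Continuous fun q : E3 => ((1:ℝ) + ‖p‖ ^ 2) + ‖q‖ ^ 2).rpow_const
      fun q => Or.inl (by simp only [Pi.add_apply, Pi.pow_apply, Function.comp_apply]; positivity)
  -- per-p estimates
  have hmain : ∀ p : E3,
      Integrable (fun q : E3 => ((1:ℝ) + ‖p‖ ^ 2 + ‖q‖ ^ 2) ^ (-(2:ℝ)) * ‖f q‖) ∧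
      Integrable (fun q : E3 =>
        ((1:ℝ) + ‖p‖ ^ 2 + ‖q‖ ^ 2) ^ (-(2:ℝ)) * ‖f q‖ ^ 2 * ((1:ℝ) + ‖q‖ ^ 2) ^ ((1/4:ℝ))) ∧
      (∫ q : E3, ((1:ℝ) + ‖p‖ ^ 2 + ‖q‖ ^ 2) ^ (-(2:ℝ)) * ‖f q‖) ^ 2
        ≤ (((1:ℝ) + ‖p‖ ^ 2) ^ (-(1/2:ℝ)) * I1) *
          ∫ q : E3, ((1:ℝ) + ‖p‖ ^ 2 + ‖q‖ ^ 2) ^ (-(2:ℝ)) * ‖f q‖ ^ 2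
            * ((1:ℝ) + ‖q‖ ^ 2) ^ ((1/4:ℝ)) := by
    intro p
    have hTnn : ∀ q : E3, (0:ℝ) ≤ ((1:ℝ) + ‖p‖ ^ 2 + ‖q‖ ^ 2) ^ (-(2:ℝ)) :=
      fun q => Real.rpow_nonneg (hTpos p q).le _
    set u : E3 → ℝ := fun q =>
      Real.sqrt (((1:ℝ) + ‖p‖ ^ 2 + ‖q‖ ^ 2) ^ (-(2:ℝ))) * ((1:ℝ) + ‖q‖ ^ 2) ^ (-(1/8:ℝ)) with hu
    set v : E3 → ℝ := fun q =>
      Real.sqrt (((1:ℝ) + ‖p‖ ^ 2 + ‖q‖ ^ 2) ^ (-(2:ℝ))) * ‖f q‖ * ((1:ℝ) + ‖q‖ ^ 2) ^ ((1/8:ℝ))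
      with hv
    have huv : ∀ q, u q * v q = ((1:ℝ) + ‖p‖ ^ 2 + ‖q‖ ^ 2) ^ (-(2:ℝ)) * ‖f q‖ := by
      intro q
      have e1 := Real.mul_self_sqrt (hTnn q)
      have e2 : ((1:ℝ) + ‖q‖ ^ 2) ^ (-(1/8:ℝ)) * ((1:ℝ) + ‖q‖ ^ 2) ^ ((1/8:ℝ)) = 1 := by
        rw [← Real.rpow_add (by positivity)]; norm_num
      calc u q * v q
          = (Real.sqrt (((1:ℝ) + ‖p‖ ^ 2 + ‖q‖ ^ 2) ^ (-(2:ℝ)))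
            * Real.sqrt (((1:ℝ) + ‖p‖ ^ 2 + ‖q‖ ^ 2) ^ (-(2:ℝ)))) * ‖f q‖
            * (((1:ℝ) + ‖q‖ ^ 2) ^ (-(1/8:ℝ)) * ((1:ℝ) + ‖q‖ ^ 2) ^ ((1/8:ℝ))) := by
            rw [hu, hv]; ring
        _ = ((1:ℝ) + ‖p‖ ^ 2 + ‖q‖ ^ 2) ^ (-(2:ℝ)) * ‖f q‖ := by rw [e1, e2]; ring
    have hu2e : ∀ q, u q ^ 2
        = ((1:ℝ) + ‖p‖ ^ 2 + ‖q‖ ^ 2) ^ (-(2:ℝ)) * ((1:ℝ) + ‖q‖ ^ 2) ^ (-(1/4:ℝ)) := by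
      intro q
      rw [hu, mul_pow, Real.sq_sqrt (hTnn q)]
      congr 1
      rw [← Real.rpow_natCast (((1:ℝ) + ‖q‖ ^ 2) ^ (-(1/8:ℝ))) 2,
        ← Real.rpow_mul (by positivity)]
      norm_num
    have hv2e : ∀ q, v q ^ 2
        = ((1:ℝ) + ‖p‖ ^ 2 + ‖q‖ ^ 2) ^ (-(2:ℝ)) * ‖f q‖ ^ 2 * ((1:ℝ) + ‖q‖ ^ 2) ^ ((1/4:ℝ)) := by
      intro q
      rw [hv, mul_pow, mul_pow, Real.sq_sqrt (hTnn q)]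
      congr 1
      rw [← Real.rpow_natCast (((1:ℝ) + ‖q‖ ^ 2) ^ ((1/8:ℝ))) 2,
        ← Real.rpow_mul (by positivity)]
      norm_num
    have hu2i : Integrable (fun q => u q ^ 2) := by
      rw [show (fun q => u q ^ 2) = fun q : E3 =>
        ((1:ℝ) + ‖p‖ ^ 2 + ‖q‖ ^ 2) ^ (-(2:ℝ)) * ((1:ℝ) + ‖q‖ ^ 2) ^ (-(1/4:ℝ)) from
        funext hu2e]
      apply Integrable.mono' hI1int
      · exact ((hTcont p).mul (hWcont (-(1/4:ℝ)))).aestronglyMeasurable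
      · apply Filter.Eventually.of_forall
        intro q
        rw [Real.norm_of_nonneg (by positivity)]
        have b1 : ((1:ℝ) + ‖p‖ ^ 2 + ‖q‖ ^ 2) ^ (-(2:ℝ)) ≤ ((1:ℝ) + ‖q‖ ^ 2) ^ (-(3/2:ℝ)) :=
          aux_T_le (sq_nonneg ‖p‖) (sq_nonneg ‖q‖) (by norm_num) (by norm_num)
        calc ((1:ℝ) + ‖p‖ ^ 2 + ‖q‖ ^ 2) ^ (-(2:ℝ)) * ((1:ℝ) + ‖q‖ ^ 2) ^ (-(1/4:ℝ))
            ≤ ((1:ℝ) + ‖q‖ ^ 2) ^ (-(3/2:ℝ)) * ((1:ℝ) + ‖q‖ ^ 2) ^ (-(1/4:ℝ)) :=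
              mul_le_mul_of_nonneg_right b1 (by positivity)
          _ = ((1:ℝ) + ‖q‖ ^ 2) ^ (-(7/4:ℝ)) := by
              rw [← Real.rpow_add (by positivity)]; norm_num
    have hv2i : Integrable (fun q => v q ^ 2) := by
      rw [show (fun q => v q ^ 2) = fun q : E3 =>
        ((1:ℝ) + ‖p‖ ^ 2 + ‖q‖ ^ 2) ^ (-(2:ℝ)) * ‖f q‖ ^ 2 * ((1:ℝ) + ‖q‖ ^ 2) ^ ((1/4:ℝ)) from
        funext hv2e]
      apply Integrable.mono' hfi
      · exact (((hTcont p).measurable.mul (hfm.norm.pow_const 2)).mul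
          (hWcont ((1/4:ℝ))).measurable).aestronglyMeasurable
      · apply Filter.Eventually.of_forall
        intro q
        rw [Real.norm_of_nonneg (by positivity)]
        have b1 : ((1:ℝ) + ‖p‖ ^ 2 + ‖q‖ ^ 2) ^ (-(2:ℝ)) * ((1:ℝ) + ‖q‖ ^ 2) ^ ((1/4:ℝ))
            ≤ ((1:ℝ) + ‖q‖ ^ 2) ^ ((1:ℝ)/2) := by
          have b2 : ((1:ℝ) + ‖p‖ ^ 2 + ‖q‖ ^ 2) ^ (-(2:ℝ)) ≤ ((1:ℝ) + ‖q‖ ^ 2) ^ (-(2:ℝ)) :=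
            aux_T_le (sq_nonneg ‖p‖) (sq_nonneg ‖q‖) le_rfl (by norm_num)
          calc ((1:ℝ) + ‖p‖ ^ 2 + ‖q‖ ^ 2) ^ (-(2:ℝ)) * ((1:ℝ) + ‖q‖ ^ 2) ^ ((1/4:ℝ))
              ≤ ((1:ℝ) + ‖q‖ ^ 2) ^ (-(2:ℝ)) * ((1:ℝ) + ‖q‖ ^ 2) ^ ((1/4:ℝ)) :=
                mul_le_mul_of_nonneg_right b2 (by positivity)
            _ = ((1:ℝ) + ‖q‖ ^ 2) ^ (-(7/4:ℝ)) := by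
                rw [← Real.rpow_add (by positivity)]; norm_num
            _ ≤ ((1:ℝ) + ‖q‖ ^ 2) ^ ((1:ℝ)/2) :=
                Real.rpow_le_rpow_of_exponent_le (by nlinarith [sq_nonneg ‖q‖]) (by norm_num)
        calc ((1:ℝ) + ‖p‖ ^ 2 + ‖q‖ ^ 2) ^ (-(2:ℝ)) * ‖f q‖ ^ 2 * ((1:ℝ) + ‖q‖ ^ 2) ^ ((1/4:ℝ))
            = (((1:ℝ) + ‖p‖ ^ 2 + ‖q‖ ^ 2) ^ (-(2:ℝ)) * ((1:ℝ) + ‖q‖ ^ 2) ^ ((1/4:ℝ)))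
              * ‖f q‖ ^ 2 := by ring
          _ ≤ ((1:ℝ) + ‖q‖ ^ 2) ^ ((1:ℝ)/2) * ‖f q‖ ^ 2 :=
              mul_le_mul_of_nonneg_right b1 (sq_nonneg _)
    have hum : AEStronglyMeasurable u volume :=
      ((Real.continuous_sqrt.comp (hTcont p)).mul (hWcont (-(1/8:ℝ)))).aestronglyMeasurable
    have hvm : AEStronglyMeasurable v volume :=
      (((Real.continuous_sqrt.comp (hTcont p)).measurable.mul hfm.norm).mul
        (hWcont ((1/8:ℝ))).measurable).aestronglyMeasurable
    have hun : ∀ q, 0 ≤ u q := fun q => by rw [hu]; positivity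
    have hvn : ∀ q, 0 ≤ v q := fun q => by
      rw [hv]; exact mul_nonneg (mul_nonneg (Real.sqrt_nonneg _) (norm_nonneg _)) (by positivity)
    have hcs := aux_cs hum hvm hun hvn hu2i hv2i
    rw [show (fun q => u q * v q)
        = fun q : E3 => ((1:ℝ) + ‖p‖ ^ 2 + ‖q‖ ^ 2) ^ (-(2:ℝ)) * ‖f q‖ from funext huv] at hcs
    rw [show (fun q => u q ^ 2) = fun q : E3 =>
        ((1:ℝ) + ‖p‖ ^ 2 + ‖q‖ ^ 2) ^ (-(2:ℝ)) * ((1:ℝ) + ‖q‖ ^ 2) ^ (-(1/4:ℝ)) from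
        funext hu2e] at hcs
    rw [show (fun q => v q ^ 2) = fun q : E3 =>
        ((1:ℝ) + ‖p‖ ^ 2 + ‖q‖ ^ 2) ^ (-(2:ℝ)) * ‖f q‖ ^ 2 * ((1:ℝ) + ‖q‖ ^ 2) ^ ((1/4:ℝ)) from
        funext hv2e] at hcs
    have hv2pos : 0 ≤ ∫ q : E3, ((1:ℝ) + ‖p‖ ^ 2 + ‖q‖ ^ 2) ^ (-(2:ℝ)) * ‖f q‖ ^ 2
        * ((1:ℝ) + ‖q‖ ^ 2) ^ ((1/4:ℝ)) :=
      integral_nonneg fun q => by positivity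
    have hint1 : Integrable (fun q : E3 =>
        ((1:ℝ) + ‖p‖ ^ 2 + ‖q‖ ^ 2) ^ (-(2:ℝ)) * ‖f q‖) := by
      have hm' : AEStronglyMeasurable (fun q : E3 =>
          ((1:ℝ) + ‖p‖ ^ 2 + ‖q‖ ^ 2) ^ (-(2:ℝ)) * ‖f q‖) volume :=
        ((hTcont p).measurable.mul hfm.norm).aestronglyMeasurable
      apply Integrable.mono' ((hu2i.add hv2i).const_mul (1/2)) hm'
      apply Filter.Eventually.of_forall
      intro q
      rw [Real.norm_of_nonneg (mul_nonneg (hTnn q) (norm_nonneg _)), ← huv q]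
      simp only [Pi.add_apply]
      nlinarith [sq_nonneg (u q - v q)]
    refine ⟨hint1, ?_, ?_⟩
    · rw [show (fun q : E3 =>
        ((1:ℝ) + ‖p‖ ^ 2 + ‖q‖ ^ 2) ^ (-(2:ℝ)) * ‖f q‖ ^ 2 * ((1:ℝ) + ‖q‖ ^ 2) ^ ((1/4:ℝ)))
        = fun q => v q ^ 2 from funext fun q => (hv2e q).symm]
      exact hv2i
    -- Cauchy–Schwarz plus first-factor bound
    have hub : ∫ q : E3, ((1:ℝ) + ‖p‖ ^ 2 + ‖q‖ ^ 2) ^ (-(2:ℝ)) * ((1:ℝ) + ‖q‖ ^ 2) ^ (-(1/4:ℝ))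
        ≤ ((1:ℝ) + ‖p‖ ^ 2) ^ (-(1/2:ℝ)) * I1 := by
      rw [hI1, ← integral_const_mul]
      apply integral_mono_of_nonneg
      · exact Filter.Eventually.of_forall fun q => by positivity
      · exact hI1int.const_mul _
      · apply Filter.Eventually.of_forall
        intro q
        have hsp := aux_Tsplit (sq_nonneg ‖p‖) (sq_nonneg ‖q‖)
        calc ((1:ℝ) + ‖p‖ ^ 2 + ‖q‖ ^ 2) ^ (-(2:ℝ)) * ((1:ℝ) + ‖q‖ ^ 2) ^ (-(1/4:ℝ))
            ≤ (((1:ℝ) + ‖p‖ ^ 2) ^ (-(1/2:ℝ)) * ((1:ℝ) + ‖q‖ ^ 2) ^ (-(3/2:ℝ)))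
              * ((1:ℝ) + ‖q‖ ^ 2) ^ (-(1/4:ℝ)) :=
              mul_le_mul_of_nonneg_right hsp (by positivity)
          _ = ((1:ℝ) + ‖p‖ ^ 2) ^ (-(1/2:ℝ))
              * (((1:ℝ) + ‖q‖ ^ 2) ^ (-(3/2:ℝ)) * ((1:ℝ) + ‖q‖ ^ 2) ^ (-(1/4:ℝ))) := by ring
          _ = ((1:ℝ) + ‖p‖ ^ 2) ^ (-(1/2:ℝ)) * ((1:ℝ) + ‖q‖ ^ 2) ^ (-(7/4:ℝ)) := by
              rw [← Real.rpow_add (by positivity)]; norm_num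
    calc (∫ q : E3, ((1:ℝ) + ‖p‖ ^ 2 + ‖q‖ ^ 2) ^ (-(2:ℝ)) * ‖f q‖) ^ 2
        ≤ (∫ q : E3, ((1:ℝ) + ‖p‖ ^ 2 + ‖q‖ ^ 2) ^ (-(2:ℝ)) * ((1:ℝ) + ‖q‖ ^ 2) ^ (-(1/4:ℝ)))
          * ∫ q : E3, ((1:ℝ) + ‖p‖ ^ 2 + ‖q‖ ^ 2) ^ (-(2:ℝ)) * ‖f q‖ ^ 2
            * ((1:ℝ) + ‖q‖ ^ 2) ^ ((1/4:ℝ)) := hcs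
      _ ≤ (((1:ℝ) + ‖p‖ ^ 2) ^ (-(1/2:ℝ)) * I1) *
          ∫ q : E3, ((1:ℝ) + ‖p‖ ^ 2 + ‖q‖ ^ 2) ^ (-(2:ℝ)) * ‖f q‖ ^ 2
            * ((1:ℝ) + ‖q‖ ^ 2) ^ ((1/4:ℝ)) :=
          mul_le_mul_of_nonneg_right hub hv2pos
  -- inverse-weight identity
  have hwinv : ∀ p : E3, ((1:ℝ) + ‖p‖ ^ 2) ^ ((1:ℝ)/2) * ((1:ℝ) + ‖p‖ ^ 2) ^ (-(1/2:ℝ)) = 1 := by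
    intro p
    rw [← Real.rpow_add (by positivity)]; norm_num
  -- pointwise master bound
  have hptwise : ∀ p : E3, (1 + ‖p‖ ^ 2) ^ ((1 : ℝ) / 2) *
      ‖((2 * Real.pi ^ 2 *
          (Real.sqrt (nu m * ‖p‖ ^ 2 + lam) - Real.sqrt (nu m * ‖p‖ ^ 2 + lam')) : ℝ) : ℂ)
          * f p
        + ((lam' - lam : ℝ) : ℂ) *
          ∫ q : E3, f q / (((Gker m p q + lam) * (Gker m p q + lam') : ℝ) : ℂ)‖ ^ 2
      ≤ 2*d^2*((1 + ‖p‖ ^ 2) ^ ((1:ℝ)/2) * ‖f p‖ ^ 2)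
        + 2*Λ^2*M0^2*I1 * ∫ q : E3, ((1:ℝ) + ‖p‖ ^ 2 + ‖q‖ ^ 2) ^ (-(2:ℝ)) * ‖f q‖ ^ 2
            * ((1:ℝ) + ‖q‖ ^ 2) ^ ((1/4:ℝ)) := by
    intro p
    obtain ⟨hint1, hint2, hcs2⟩ := hmain p
    have hIp0 : 0 ≤ ∫ q : E3, ((1:ℝ) + ‖p‖ ^ 2 + ‖q‖ ^ 2) ^ (-(2:ℝ)) * ‖f q‖ :=
      integral_nonneg fun q => mul_nonneg (Real.rpow_nonneg (hTpos p q).le _) (norm_nonneg _)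
    have hJp0 : 0 ≤ ∫ q : E3, ((1:ℝ) + ‖p‖ ^ 2 + ‖q‖ ^ 2) ^ (-(2:ℝ)) * ‖f q‖ ^ 2
        * ((1:ℝ) + ‖q‖ ^ 2) ^ ((1/4:ℝ)) := integral_nonneg fun q => by positivity
    have hAb : ‖((2 * Real.pi ^ 2 *
        (Real.sqrt (nu m * ‖p‖ ^ 2 + lam) - Real.sqrt (nu m * ‖p‖ ^ 2 + lam')) : ℝ) : ℂ)
        * f p‖ ≤ d * ‖f p‖ := by
      rw [norm_mul, Complex.norm_real, Real.norm_eq_abs]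
      exact mul_le_mul_of_nonneg_right (hmult p) (norm_nonneg _)
    have hBb : ‖((lam' - lam : ℝ) : ℂ) *
        ∫ q : E3, f q / (((Gker m p q + lam) * (Gker m p q + lam') : ℝ) : ℂ)‖
        ≤ Λ * (M0 * ∫ q : E3, ((1:ℝ) + ‖p‖ ^ 2 + ‖q‖ ^ 2) ^ (-(2:ℝ)) * ‖f q‖) := by
      rw [norm_mul, Complex.norm_real, Real.norm_eq_abs, ← hΛ]
      apply mul_le_mul_of_nonneg_left _ hΛ0
      calc ‖∫ q : E3, f q / (((Gker m p q + lam) * (Gker m p q + lam') : ℝ) : ℂ)‖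
          ≤ ∫ q : E3, ‖f q / (((Gker m p q + lam) * (Gker m p q + lam') : ℝ) : ℂ)‖ :=
            norm_integral_le_integral_norm _
        _ ≤ ∫ q : E3, M0 * (((1:ℝ) + ‖p‖ ^ 2 + ‖q‖ ^ 2) ^ (-(2:ℝ)) * ‖f q‖) :=
            integral_mono_of_nonneg
              (Filter.Eventually.of_forall fun q => norm_nonneg _)
              (hint1.const_mul M0)
              (Filter.Eventually.of_forall fun q => hker f p q)
        _ = M0 * ∫ q : E3, ((1:ℝ) + ‖p‖ ^ 2 + ‖q‖ ^ 2) ^ (-(2:ℝ)) * ‖f q‖ :=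
            integral_const_mul _ _
    have h1 := le_trans (norm_add_le _ _) (add_le_add hAb hBb)
    have h2 := pow_le_pow_left₀ (norm_nonneg _) h1 2
    have ha0 : 0 ≤ d * ‖f p‖ := mul_nonneg hd0 (norm_nonneg _)
    have hb0 : 0 ≤ Λ * (M0 * ∫ q : E3, ((1:ℝ) + ‖p‖ ^ 2 + ‖q‖ ^ 2) ^ (-(2:ℝ)) * ‖f q‖) :=
      mul_nonneg hΛ0 (mul_nonneg hM00.le hIp0)
    have h3 : ‖((2 * Real.pi ^ 2 *
        (Real.sqrt (nu m * ‖p‖ ^ 2 + lam) - Real.sqrt (nu m * ‖p‖ ^ 2 + lam')) : ℝ) : ℂ)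
          * f p
        + ((lam' - lam : ℝ) : ℂ) *
          ∫ q : E3, f q / (((Gker m p q + lam) * (Gker m p q + lam') : ℝ) : ℂ)‖ ^ 2
        ≤ 2*(d * ‖f p‖)^2
          + 2*(Λ * (M0 * ∫ q : E3, ((1:ℝ) + ‖p‖ ^ 2 + ‖q‖ ^ 2) ^ (-(2:ℝ)) * ‖f q‖))^2 := by
      nlinarith [h2, sq_nonneg (d * ‖f p‖
        - Λ * (M0 * ∫ q : E3, ((1:ℝ) + ‖p‖ ^ 2 + ‖q‖ ^ 2) ^ (-(2:ℝ)) * ‖f q‖))]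
    have hwp : (0:ℝ) ≤ (1 + ‖p‖ ^ 2) ^ ((1:ℝ)/2) := by positivity
    have h4 : (1 + ‖p‖ ^ 2) ^ ((1:ℝ)/2)
          * (∫ q : E3, ((1:ℝ) + ‖p‖ ^ 2 + ‖q‖ ^ 2) ^ (-(2:ℝ)) * ‖f q‖) ^ 2
        ≤ I1 * ∫ q : E3, ((1:ℝ) + ‖p‖ ^ 2 + ‖q‖ ^ 2) ^ (-(2:ℝ)) * ‖f q‖ ^ 2
            * ((1:ℝ) + ‖q‖ ^ 2) ^ ((1/4:ℝ)) := by
      calc (1 + ‖p‖ ^ 2) ^ ((1:ℝ)/2)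
            * (∫ q : E3, ((1:ℝ) + ‖p‖ ^ 2 + ‖q‖ ^ 2) ^ (-(2:ℝ)) * ‖f q‖) ^ 2
          ≤ (1 + ‖p‖ ^ 2) ^ ((1:ℝ)/2) * ((((1:ℝ) + ‖p‖ ^ 2) ^ (-(1/2:ℝ)) * I1) *
              ∫ q : E3, ((1:ℝ) + ‖p‖ ^ 2 + ‖q‖ ^ 2) ^ (-(2:ℝ)) * ‖f q‖ ^ 2
                * ((1:ℝ) + ‖q‖ ^ 2) ^ ((1/4:ℝ))) :=
            mul_le_mul_of_nonneg_left hcs2 hwp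
        _ = ((1 + ‖p‖ ^ 2) ^ ((1:ℝ)/2) * ((1:ℝ) + ‖p‖ ^ 2) ^ (-(1/2:ℝ))) *
              (I1 * ∫ q : E3, ((1:ℝ) + ‖p‖ ^ 2 + ‖q‖ ^ 2) ^ (-(2:ℝ)) * ‖f q‖ ^ 2
                * ((1:ℝ) + ‖q‖ ^ 2) ^ ((1/4:ℝ))) := by ring
        _ = I1 * ∫ q : E3, ((1:ℝ) + ‖p‖ ^ 2 + ‖q‖ ^ 2) ^ (-(2:ℝ)) * ‖f q‖ ^ 2
                * ((1:ℝ) + ‖q‖ ^ 2) ^ ((1/4:ℝ)) := by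
            rw [hwinv p, one_mul]
    calc (1 + ‖p‖ ^ 2) ^ ((1 : ℝ) / 2) * ‖_ + _‖ ^ 2
        ≤ (1 + ‖p‖ ^ 2) ^ ((1 : ℝ) / 2) * (2*(d * ‖f p‖)^2
          + 2*(Λ * (M0 * ∫ q : E3, ((1:ℝ) + ‖p‖ ^ 2 + ‖q‖ ^ 2) ^ (-(2:ℝ)) * ‖f q‖))^2) :=
          mul_le_mul_of_nonneg_left h3 hwp
      _ = 2*d^2*((1 + ‖p‖ ^ 2) ^ ((1:ℝ)/2) * ‖f p‖ ^ 2)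
          + 2*Λ^2*M0^2 * ((1 + ‖p‖ ^ 2) ^ ((1:ℝ)/2)
            * (∫ q : E3, ((1:ℝ) + ‖p‖ ^ 2 + ‖q‖ ^ 2) ^ (-(2:ℝ)) * ‖f q‖) ^ 2) := by ring
      _ ≤ 2*d^2*((1 + ‖p‖ ^ 2) ^ ((1:ℝ)/2) * ‖f p‖ ^ 2)
          + 2*Λ^2*M0^2*I1 * ∫ q : E3, ((1:ℝ) + ‖p‖ ^ 2 + ‖q‖ ^ 2) ^ (-(2:ℝ)) * ‖f q‖ ^ 2
            * ((1:ℝ) + ‖q‖ ^ 2) ^ ((1/4:ℝ)) := by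
          have hfac : (0:ℝ) ≤ 2*Λ^2*M0^2 :=
            mul_nonneg (mul_nonneg (by norm_num) (sq_nonneg _)) (sq_nonneg _)
          nlinarith [mul_le_mul_of_nonneg_left h4 hfac]
  -- product integrability of the kernel against |f|^2
  have hFmeas : AEStronglyMeasurable (fun z : E3 × E3 =>
      ((1:ℝ) + ‖z.1‖ ^ 2 + ‖z.2‖ ^ 2) ^ (-(2:ℝ)) * ‖f z.2‖ ^ 2
        * ((1:ℝ) + ‖z.2‖ ^ 2) ^ ((1/4:ℝ))) (volume.prod volume) := by
    have hc1 : Continuous fun z : E3 × E3 => ((1:ℝ) + ‖z.1‖ ^ 2) + ‖z.2‖ ^ 2 :=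
      (continuous_const.add ((continuous_norm.comp continuous_fst).pow 2)).add
        ((continuous_norm.comp continuous_snd).pow 2)
    have hTz : Continuous fun z : E3 × E3 => (((1:ℝ) + ‖z.1‖ ^ 2) + ‖z.2‖ ^ 2) ^ (-(2:ℝ)) :=
      hc1.rpow_const fun z => Or.inl (by positivity)
    have hWz : Continuous fun z : E3 × E3 => ((1:ℝ) + ‖z.2‖ ^ 2) ^ ((1/4:ℝ)) :=
      (continuous_const.add ((continuous_norm.comp continuous_snd).pow 2)).rpow_const
        fun z => Or.inl (by simp only [Pi.add_apply, Pi.pow_apply, Function.comp_apply]; positivity)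
    have hfz : Measurable fun z : E3 × E3 => ‖f z.2‖ ^ 2 :=
      (hfm.comp measurable_snd).norm.pow_const 2
    exact ((hTz.measurable.mul hfz).mul hWz.measurable).aestronglyMeasurable
  have hinner : ∀ q : E3, (∫ p : E3,
      ((1:ℝ) + ‖p‖ ^ 2 + ‖q‖ ^ 2) ^ (-(2:ℝ)) * ‖f q‖ ^ 2 * ((1:ℝ) + ‖q‖ ^ 2) ^ ((1/4:ℝ)))
      ≤ I2 * (((1:ℝ) + ‖q‖ ^ 2) ^ ((1:ℝ)/2) * ‖f q‖ ^ 2) := by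
    intro q
    have step1 : (∫ p : E3,
        ((1:ℝ) + ‖p‖ ^ 2 + ‖q‖ ^ 2) ^ (-(2:ℝ)) * ‖f q‖ ^ 2 * ((1:ℝ) + ‖q‖ ^ 2) ^ ((1/4:ℝ)))
        ≤ ∫ p : E3, (‖f q‖ ^ 2 * ((1:ℝ) + ‖q‖ ^ 2) ^ ((1/4:ℝ))) * ((1:ℝ) + ‖p‖ ^ 2) ^ (-(2:ℝ)) := by
      apply integral_mono_of_nonneg
      · exact Filter.Eventually.of_forall fun p => by positivity
      · exact hI2int.const_mul _
      · apply Filter.Eventually.of_forall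
        intro p
        have hb := aux_T_le' (sq_nonneg ‖p‖) (sq_nonneg ‖q‖) (le_refl (2:ℝ)) (by norm_num)
        calc ((1:ℝ) + ‖p‖ ^ 2 + ‖q‖ ^ 2) ^ (-(2:ℝ)) * ‖f q‖ ^ 2 * ((1:ℝ) + ‖q‖ ^ 2) ^ ((1/4:ℝ))
            = (‖f q‖ ^ 2 * ((1:ℝ) + ‖q‖ ^ 2) ^ ((1/4:ℝ)))
              * ((1:ℝ) + ‖p‖ ^ 2 + ‖q‖ ^ 2) ^ (-(2:ℝ)) := by ring
          _ ≤ (‖f q‖ ^ 2 * ((1:ℝ) + ‖q‖ ^ 2) ^ ((1/4:ℝ))) * ((1:ℝ) + ‖p‖ ^ 2) ^ (-(2:ℝ)) :=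
              mul_le_mul_of_nonneg_left hb (by positivity)
    have step2 : (∫ p : E3, (‖f q‖ ^ 2 * ((1:ℝ) + ‖q‖ ^ 2) ^ ((1/4:ℝ)))
          * ((1:ℝ) + ‖p‖ ^ 2) ^ (-(2:ℝ)))
        = (‖f q‖ ^ 2 * ((1:ℝ) + ‖q‖ ^ 2) ^ ((1/4:ℝ))) * I2 := by
      rw [hI2]; exact integral_const_mul _ _
    have step3 : (‖f q‖ ^ 2 * ((1:ℝ) + ‖q‖ ^ 2) ^ ((1/4:ℝ))) * I2
        ≤ I2 * (((1:ℝ) + ‖q‖ ^ 2) ^ ((1:ℝ)/2) * ‖f q‖ ^ 2) := by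
      have hle : ((1:ℝ) + ‖q‖ ^ 2) ^ ((1/4:ℝ)) ≤ ((1:ℝ) + ‖q‖ ^ 2) ^ ((1:ℝ)/2) :=
        Real.rpow_le_rpow_of_exponent_le (by nlinarith [sq_nonneg ‖q‖]) (by norm_num)
      nlinarith [mul_le_mul_of_nonneg_left hle (sq_nonneg ‖f q‖),
        mul_le_mul_of_nonneg_right (mul_le_mul_of_nonneg_left hle (sq_nonneg ‖f q‖)) hI20]
    linarith [step1, step2 ▸ step1, step3]
  have hFint : Integrable (fun z : E3 × E3 =>
      ((1:ℝ) + ‖z.1‖ ^ 2 + ‖z.2‖ ^ 2) ^ (-(2:ℝ)) * ‖f z.2‖ ^ 2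
        * ((1:ℝ) + ‖z.2‖ ^ 2) ^ ((1/4:ℝ))) (volume.prod volume) := by
    rw [integrable_prod_iff' hFmeas]
    constructor
    · apply Filter.Eventually.of_forall
      intro q
      have hclean : Integrable (fun p : E3 =>
          ((1:ℝ) + ‖p‖ ^ 2 + ‖q‖ ^ 2) ^ (-(2:ℝ)) * ‖f q‖ ^ 2
            * ((1:ℝ) + ‖q‖ ^ 2) ^ ((1/4:ℝ))) := by
        apply Integrable.mono' (hI2int.const_mul (‖f q‖ ^ 2 * ((1:ℝ) + ‖q‖ ^ 2) ^ ((1/4:ℝ))))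
        · have hc : Continuous fun p : E3 => (((1:ℝ) + ‖p‖ ^ 2) + ‖q‖ ^ 2) ^ (-(2:ℝ)) :=
            ((continuous_const.add (continuous_norm.pow 2)).add continuous_const).rpow_const
              fun p => Or.inl (by simp only [Pi.add_apply, Pi.pow_apply, Function.comp_apply]; positivity)
          exact ((hc.mul continuous_const).mul continuous_const).aestronglyMeasurable
        · apply Filter.Eventually.of_forall
          intro p
          rw [Real.norm_of_nonneg (by positivity)]
          have hb := aux_T_le' (sq_nonneg ‖p‖) (sq_nonneg ‖q‖) (le_refl (2:ℝ)) (by norm_num)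
          calc ((1:ℝ) + ‖p‖ ^ 2 + ‖q‖ ^ 2) ^ (-(2:ℝ)) * ‖f q‖ ^ 2 * ((1:ℝ) + ‖q‖ ^ 2) ^ ((1/4:ℝ))
              = (‖f q‖ ^ 2 * ((1:ℝ) + ‖q‖ ^ 2) ^ ((1/4:ℝ)))
                * ((1:ℝ) + ‖p‖ ^ 2 + ‖q‖ ^ 2) ^ (-(2:ℝ)) := by ring
            _ ≤ (‖f q‖ ^ 2 * ((1:ℝ) + ‖q‖ ^ 2) ^ ((1/4:ℝ))) * ((1:ℝ) + ‖p‖ ^ 2) ^ (-(2:ℝ)) :=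
                mul_le_mul_of_nonneg_left hb (by positivity)
      exact hclean
    · apply Integrable.mono' (hfi.const_mul I2)
      · have hsm : StronglyMeasurable (fun z : E3 × E3 =>
            ‖((1:ℝ) + ‖z.1‖ ^ 2 + ‖z.2‖ ^ 2) ^ (-(2:ℝ)) * ‖f z.2‖ ^ 2
              * ((1:ℝ) + ‖z.2‖ ^ 2) ^ ((1/4:ℝ))‖) := by
          have hc1 : Continuous fun z : E3 × E3 => ((1:ℝ) + ‖z.1‖ ^ 2) + ‖z.2‖ ^ 2 :=
            (continuous_const.add ((continuous_norm.comp continuous_fst).pow 2)).add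
              ((continuous_norm.comp continuous_snd).pow 2)
          have hTz : Continuous fun z : E3 × E3 =>
              (((1:ℝ) + ‖z.1‖ ^ 2) + ‖z.2‖ ^ 2) ^ (-(2:ℝ)) :=
            hc1.rpow_const fun z => Or.inl (by positivity)
          have hWz : Continuous fun z : E3 × E3 => ((1:ℝ) + ‖z.2‖ ^ 2) ^ ((1/4:ℝ)) :=
            (continuous_const.add ((continuous_norm.comp continuous_snd).pow 2)).rpow_const
              fun z => Or.inl (by simp only [Pi.add_apply, Pi.pow_apply, Function.comp_apply]; positivity)
          have hfz : Measurable fun z : E3 × E3 => ‖f z.2‖ ^ 2 :=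
            (hfm.comp measurable_snd).norm.pow_const 2
          exact (((hTz.measurable.mul hfz).mul hWz.measurable).norm).stronglyMeasurable
        exact hsm.integral_prod_left'.aestronglyMeasurable
      · apply Filter.Eventually.of_forall
        intro q
        have h0 : 0 ≤ ∫ p : E3, ‖((1:ℝ) + ‖p‖ ^ 2 + ‖q‖ ^ 2) ^ (-(2:ℝ)) * ‖f q‖ ^ 2
            * ((1:ℝ) + ‖q‖ ^ 2) ^ ((1/4:ℝ))‖ := integral_nonneg fun p => norm_nonneg _
        rw [Real.norm_of_nonneg h0]
        have he : (fun p : E3 => ‖((1:ℝ) + ‖p‖ ^ 2 + ‖q‖ ^ 2) ^ (-(2:ℝ)) * ‖f q‖ ^ 2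
            * ((1:ℝ) + ‖q‖ ^ 2) ^ ((1/4:ℝ))‖)
            = fun p : E3 => ((1:ℝ) + ‖p‖ ^ 2 + ‖q‖ ^ 2) ^ (-(2:ℝ)) * ‖f q‖ ^ 2
              * ((1:ℝ) + ‖q‖ ^ 2) ^ ((1/4:ℝ)) :=
          funext fun p => Real.norm_of_nonneg (by positivity)
        rw [he]
        exact hinner q
  -- assembly
  have hg2 : Integrable (fun p : E3 => ∫ q : E3,
      ((1:ℝ) + ‖p‖ ^ 2 + ‖q‖ ^ 2) ^ (-(2:ℝ)) * ‖f q‖ ^ 2 * ((1:ℝ) + ‖q‖ ^ 2) ^ ((1/4:ℝ))) :=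
    hFint.integral_prod_left
  have hgint : Integrable (fun p : E3 =>
      2*d^2*((1 + ‖p‖ ^ 2) ^ ((1:ℝ)/2) * ‖f p‖ ^ 2)
        + 2*Λ^2*M0^2*I1 * ∫ q : E3, ((1:ℝ) + ‖p‖ ^ 2 + ‖q‖ ^ 2) ^ (-(2:ℝ)) * ‖f q‖ ^ 2
            * ((1:ℝ) + ‖q‖ ^ 2) ^ ((1/4:ℝ))) :=
    (hfi.const_mul _).add (hg2.const_mul _)
  have hswap : (∫ p : E3, ∫ q : E3,
      ((1:ℝ) + ‖p‖ ^ 2 + ‖q‖ ^ 2) ^ (-(2:ℝ)) * ‖f q‖ ^ 2 * ((1:ℝ) + ‖q‖ ^ 2) ^ ((1/4:ℝ)))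
      = ∫ q : E3, ∫ p : E3,
      ((1:ℝ) + ‖p‖ ^ 2 + ‖q‖ ^ 2) ^ (-(2:ℝ)) * ‖f q‖ ^ 2 * ((1:ℝ) + ‖q‖ ^ 2) ^ ((1/4:ℝ)) :=
    integral_integral_swap hFint
  have hSbound : (∫ p : E3, ∫ q : E3,
      ((1:ℝ) + ‖p‖ ^ 2 + ‖q‖ ^ 2) ^ (-(2:ℝ)) * ‖f q‖ ^ 2 * ((1:ℝ) + ‖q‖ ^ 2) ^ ((1/4:ℝ)))
      ≤ I2 * N := by
    rw [hswap]
    calc (∫ q : E3, ∫ p : E3,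
        ((1:ℝ) + ‖p‖ ^ 2 + ‖q‖ ^ 2) ^ (-(2:ℝ)) * ‖f q‖ ^ 2 * ((1:ℝ) + ‖q‖ ^ 2) ^ ((1/4:ℝ)))
        ≤ ∫ q : E3, I2 * (((1:ℝ) + ‖q‖ ^ 2) ^ ((1:ℝ)/2) * ‖f q‖ ^ 2) := by
          apply integral_mono_of_nonneg
          · exact Filter.Eventually.of_forall fun q => integral_nonneg fun p => by positivity
          · exact hfi.const_mul I2
          · exact Filter.Eventually.of_forall hinner
      _ = I2 * N := by rw [hN]; exact integral_const_mul _ _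
  calc (∫ p : E3, (1 + ‖p‖ ^ 2) ^ ((1 : ℝ) / 2) *
        ‖((2 * Real.pi ^ 2 *
            (Real.sqrt (nu m * ‖p‖ ^ 2 + lam) - Real.sqrt (nu m * ‖p‖ ^ 2 + lam')) : ℝ) : ℂ)
            * f p
          + ((lam' - lam : ℝ) : ℂ) *
            ∫ q : E3, f q / (((Gker m p q + lam) * (Gker m p q + lam') : ℝ) : ℂ)‖ ^ 2)
      ≤ ∫ p : E3, (2*d^2*((1 + ‖p‖ ^ 2) ^ ((1:ℝ)/2) * ‖f p‖ ^ 2)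
        + 2*Λ^2*M0^2*I1 * ∫ q : E3, ((1:ℝ) + ‖p‖ ^ 2 + ‖q‖ ^ 2) ^ (-(2:ℝ)) * ‖f q‖ ^ 2
            * ((1:ℝ) + ‖q‖ ^ 2) ^ ((1/4:ℝ))) := by
        apply integral_mono_of_nonneg
        · exact Filter.Eventually.of_forall fun p => by positivity
        · exact hgint
        · exact Filter.Eventually.of_forall hptwise
    _ = 2*d^2*N + 2*Λ^2*M0^2*I1 * (∫ p : E3, ∫ q : E3,
          ((1:ℝ) + ‖p‖ ^ 2 + ‖q‖ ^ 2) ^ (-(2:ℝ)) * ‖f q‖ ^ 2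
            * ((1:ℝ) + ‖q‖ ^ 2) ^ ((1/4:ℝ))) := by
        rw [integral_add (hfi.const_mul _) (hg2.const_mul _), integral_const_mul,
          integral_const_mul, hN]
    _ ≤ (2*d^2 + 2*Λ^2*M0^2*I1*I2 + 1) * N := by
        have hfac : (0:ℝ) ≤ 2*Λ^2*M0^2*I1 :=
          mul_nonneg (mul_nonneg (mul_nonneg (by norm_num) (sq_nonneg _)) (sq_nonneg _)) hI10
        nlinarith [mul_le_mul_of_nonneg_left hSbound hfac, hN0, sq_nonneg d]
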